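/- Let H := {(s,t) ∈ ℝ² : t > 0} and define w : H → ℝ by w(s,t) := (2/3)·Re((s+it)^{3/2}) (principal branch of the complex power). Then the map T(s,t) := (∂_s w(s,t), ∂_t w(s,t)) equals (Re (s+it)^{1/2}, −Im (s+it)^{1/2}); T is a real analytic bijection from H onto the open quarter plane Q := {(p,q) ∈ ℝ² : p > 0, q < 0}, with inverse T⁻¹(p,q) = (p² − q², −2pq); and the associated Legendre function v(p,q) := w(T⁻¹(p,q)) − (p² − q²)·p − (−2pq)·q satisfies v(p,q) = −(1/3)(p³ − 3pq²) for all (p,q) ∈ Q. -/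

import Mathlib

open Complex

noncomputable section

/-- The two-dimensional model solution `w(s,t) = (2/3) Re((s+it)^{3/2})`. -/
def wModel : ℝ × ℝ → ℝ :=
  fun z => (2 / 3) * ((((z.1 : ℂ) + (z.2 : ℂ) * Complex.I) ^ (3 / 2 : ℂ)).re)

/-- Its partial Hodograph transform `T(s,t) = (∂_s w, ∂_t w)`. -/
def TModel : ℝ × ℝ → ℝ × ℝ :=
  fun z => (fderiv ℝ wModel z (1, 0), fderiv ℝ wModel z (0, 1))

/-- The upper half plane `H`. -/
def Hset : Set (ℝ × ℝ) := {z | 0 < z.2}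

/-- The open quarter plane `Q = {p > 0, q < 0}`. -/
def Qset : Set (ℝ × ℝ) := {z | 0 < z.1 ∧ z.2 < 0}

/-- The associated Legendre function
`v(p,q) = w(p² - q², -2pq) - (p² - q²)p - (-2pq)q`. -/
def vModel : ℝ × ℝ → ℝ :=
  fun z => wModel (z.1 ^ 2 - z.2 ^ 2, -2 * z.1 * z.2)
    - (z.1 ^ 2 - z.2 ^ 2) * z.1 - (-2 * z.1 * z.2) * z.2

/-- The real-linear embedding `(a,b) ↦ a + b i`. -/
def emb : ℝ × ℝ →L[ℝ] ℂ :=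
  Complex.ofRealCLM.comp (ContinuousLinearMap.fst ℝ ℝ ℝ) +
    Complex.I • Complex.ofRealCLM.comp (ContinuousLinearMap.snd ℝ ℝ ℝ)

lemma emb_apply (p : ℝ × ℝ) : emb p = (p.1 : ℂ) + (p.2 : ℂ) * Complex.I := by
  simp [emb, mul_comm]

/-- Positivity of real and imaginary parts of the principal square root in the
upper half plane. -/
lemma sqrt_re_im_pos {ζ : ℂ} (him : 0 < ζ.im) :
    0 < (ζ ^ (1 / 2 : ℂ)).re ∧ 0 < (ζ ^ (1 / 2 : ℂ)).im := by
  have hne : ζ ≠ 0 := by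
    intro h; rw [h] at him; simp at him
  have harg0 : 0 < ζ.arg := by
    have h1 : 0 ≤ ζ.arg := Complex.arg_nonneg_iff.mpr him.le
    have h2 : ζ.arg ≠ 0 := fun h => (ne_of_gt him) (Complex.arg_eq_zero_iff.mp h).2
    exact lt_of_le_of_ne h1 (Ne.symm h2)
  have hargpi : ζ.arg < Real.pi := Complex.arg_lt_pi_iff.mpr (Or.inr (ne_of_gt him))
  have hc : ζ ^ (1 / 2 : ℂ) = Complex.exp (Complex.log ζ * (1 / 2 : ℂ)) :=
    Complex.cpow_def_of_ne_zero hne _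
  have himlog : (Complex.log ζ * (1 / 2 : ℂ)).im = ζ.arg / 2 := by
    rw [Complex.mul_im, Complex.log_im, Complex.log_re]
    norm_num
    ring
  have hcos : 0 < Real.cos (ζ.arg / 2) := by
    apply Real.cos_pos_of_mem_Ioo
    exact Set.mem_Ioo.mpr ⟨by linarith [Real.pi_pos], by linarith⟩
  have hsin : 0 < Real.sin (ζ.arg / 2) := by
    apply Real.sin_pos_of_pos_of_lt_pi <;> linarith [Real.pi_pos]
  constructor
  · rw [hc, Complex.exp_re, himlog]
    exact mul_pos (Real.exp_pos _) hcos
  · rw [hc, Complex.exp_im, himlog]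
    exact mul_pos (Real.exp_pos _) hsin

lemma sq_sqrt' {ζ : ℂ} (hne : ζ ≠ 0) : (ζ ^ (1 / 2 : ℂ)) ^ 2 = ζ := by
  rw [sq, ← Complex.cpow_add _ _ hne]
  norm_num

lemma cpow_three_halves {ζ : ℂ} (hne : ζ ≠ 0) :
    ζ ^ (3 / 2 : ℂ) = ζ * ζ ^ (1 / 2 : ℂ) := by
  have : (3 / 2 : ℂ) = 1 + 1 / 2 := by norm_num
  rw [this, Complex.cpow_add _ _ hne, Complex.cpow_one]

/-- The derivative computation : `T(s,t) = (Re (s+it)^{1/2}, -Im (s+it)^{1/2})`. -/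
lemma TModel_eq (z : ℝ × ℝ) (hz : 0 < z.2) :
    TModel z = (((((z.1 : ℂ) + (z.2 : ℂ) * Complex.I) ^ (1 / 2 : ℂ)).re),
      -((((z.1 : ℂ) + (z.2 : ℂ) * Complex.I) ^ (1 / 2 : ℂ)).im)) := by
  set ζ : ℂ := (z.1 : ℂ) + (z.2 : ℂ) * Complex.I with hζ
  have hζim : ζ.im = z.2 := by simp [hζ]
  have hslit : ζ ∈ Complex.slitPlane := by
    rw [Complex.mem_slitPlane_iff]
    right; rw [hζim]; exact ne_of_gt hz
  set c : ℂ := ζ ^ (1 / 2 : ℂ) with hcdef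
  have hd : HasDerivAt (fun w : ℂ => w ^ (3 / 2 : ℂ)) ((3 / 2 : ℂ) * c) ζ := by
    have h := (Complex.hasStrictDerivAt_cpow_const (c := (3 / 2 : ℂ)) hslit).hasDerivAt
    have : (3 / 2 : ℂ) - 1 = 1 / 2 := by norm_num
    rwa [this] at h
  have hembz : emb z = ζ := (emb_apply z).trans rfl
  have h1 : HasFDerivAt (fun p : ℝ × ℝ => (emb p) ^ (3 / 2 : ℂ))
      (((ContinuousLinearMap.smulRight (1 : ℂ →L[ℂ] ℂ) ((3 / 2 : ℂ) * c)).restrictScalars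
        ℝ).comp (emb : ℝ × ℝ →L[ℝ] ℂ)) z := by
    have h0 : HasFDerivAt (fun w : ℂ => w ^ (3 / 2 : ℂ))
        ((ContinuousLinearMap.smulRight (1 : ℂ →L[ℂ] ℂ) ((3 / 2 : ℂ) * c)).restrictScalars ℝ)
        (emb z) := by
      rw [hembz]; exact hd.hasFDerivAt.restrictScalars ℝ
    exact h0.comp z (emb.hasFDerivAt (x := z))
  have h3 : HasFDerivAt wModel
      ((2 / 3 : ℝ) • (Complex.reCLM.comp
        ((((ContinuousLinearMap.smulRight (1 : ℂ →L[ℂ] ℂ) ((3 / 2 : ℂ) * c)).restrictScalars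
          ℝ).comp (emb : ℝ × ℝ →L[ℝ] ℂ))))) z := by
    have h4 := ((Complex.reCLM.hasFDerivAt.comp z h1).const_smul (2 / 3 : ℝ))
    refine h4.congr_of_eventuallyEq (Filter.Eventually.of_forall fun p => ?_)
    simp [wModel, emb_apply, smul_eq_mul]
  have hf : fderiv ℝ wModel z = (2 / 3 : ℝ) • (Complex.reCLM.comp
        ((((ContinuousLinearMap.smulRight (1 : ℂ →L[ℂ] ℂ) ((3 / 2 : ℂ) * c)).restrictScalars
          ℝ).comp (emb : ℝ × ℝ →L[ℝ] ℂ)))) := h3.fderiv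
  have e1 : emb ((1 : ℝ), (0 : ℝ)) = 1 := by rw [emb_apply]; simp
  have e2 : emb ((0 : ℝ), (1 : ℝ)) = Complex.I := by rw [emb_apply]; simp
  show (fderiv ℝ wModel z (1, 0), fderiv ℝ wModel z (0, 1)) = _
  rw [hf]
  refine Prod.ext ?_ ?_
  · simp only [ContinuousLinearMap.coe_smul', Pi.smul_apply, ContinuousLinearMap.coe_comp',
      Function.comp_apply, ContinuousLinearMap.coe_restrictScalars', e1,
      ContinuousLinearMap.smulRight_apply, ContinuousLinearMap.one_apply, one_smul,
      Complex.reCLM_apply, smul_eq_mul]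
    rw [Complex.mul_re]
    simp [← hcdef]
    ring
  · simp only [ContinuousLinearMap.coe_smul', Pi.smul_apply, ContinuousLinearMap.coe_comp',
      Function.comp_apply, ContinuousLinearMap.coe_restrictScalars', e2,
      ContinuousLinearMap.smulRight_apply, ContinuousLinearMap.one_apply,
      Complex.reCLM_apply, smul_eq_mul]
    have hre : (Complex.I * ((3 / 2 : ℂ) * c)).re = -(3 / 2 * c.im) := by
      rw [Complex.mul_re, Complex.mul_im, Complex.I_re, Complex.I_im]
      norm_num
    rw [hre]
    ring

/-- `T` followed by the inverse map is the identity on `H`. -/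
lemma TModel_left_inv (z : ℝ × ℝ) (hz : 0 < z.2) :
    ((TModel z).1 ^ 2 - (TModel z).2 ^ 2, -2 * (TModel z).1 * (TModel z).2) = z := by
  set ζ : ℂ := (z.1 : ℂ) + (z.2 : ℂ) * Complex.I with hζ
  have hζim : ζ.im = z.2 := by simp [hζ]
  have hζre : ζ.re = z.1 := by simp [hζ]
  have hne : ζ ≠ 0 := by
    intro h; rw [h] at hζim; simp at hζim; rw [← hζim] at hz; exact lt_irrefl 0 hz
  have hT := TModel_eq z hz
  set c : ℂ := ζ ^ (1 / 2 : ℂ) with hcdef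
  have hsq : c ^ 2 = ζ := sq_sqrt' hne
  have hre : (c ^ 2).re = c.re ^ 2 - c.im ^ 2 := by rw [sq, Complex.mul_re]; ring
  have him : (c ^ 2).im = 2 * c.re * c.im := by rw [sq, Complex.mul_im]; ring
  rw [hT]
  refine Prod.ext ?_ ?_
  · show c.re ^ 2 - (-c.im) ^ 2 = z.1
    rw [← hζre, ← hsq, hre]; ring
  · show -2 * c.re * (-c.im) = z.2
    rw [← hζim, ← hsq, him]; ring

/-- `sqrt(w²) = w` when `Re w > 0` and `Im w > 0`. -/
lemma sqrt_sq {w : ℂ} (hre : 0 < w.re) (him : 0 < w.im) :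
    (w ^ 2) ^ (1 / 2 : ℂ) = w := by
  have himsq : 0 < (w ^ 2).im := by
    rw [sq, Complex.mul_im]
    nlinarith
  have hne : w ^ 2 ≠ 0 := by
    intro h; rw [h] at himsq; simp at himsq
  set c : ℂ := (w ^ 2) ^ (1 / 2 : ℂ) with hcdef
  have hcsq : c ^ 2 = w ^ 2 := sq_sqrt' hne
  have hcre : 0 < c.re := (sqrt_re_im_pos himsq).1
  have hfac : (c - w) * (c + w) = 0 := by
    have : (c - w) * (c + w) = c ^ 2 - w ^ 2 := by ring
    rw [this, hcsq, sub_self]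
  rcases mul_eq_zero.mp hfac with h | h
  · exact sub_eq_zero.mp h
  · exfalso
    have : c = -w := by linear_combination h
    have : c.re = -w.re := by rw [this]; simp
    linarith

/-- The inverse map followed by `T` is the identity on `Q`. -/
lemma TModel_right_inv (z : ℝ × ℝ) (hz : z ∈ Qset) :
    (z.1 ^ 2 - z.2 ^ 2, -2 * z.1 * z.2) ∈ Hset ∧
      TModel (z.1 ^ 2 - z.2 ^ 2, -2 * z.1 * z.2) = z := by
  obtain ⟨hp, hq⟩ := hz
  have hH : (0 : ℝ) < -2 * z.1 * z.2 := by nlinarith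
  refine ⟨hH, ?_⟩
  have hT := TModel_eq (z.1 ^ 2 - z.2 ^ 2, -2 * z.1 * z.2) hH
  set w : ℂ := (z.1 : ℂ) - (z.2 : ℂ) * Complex.I with hw
  have hwre : w.re = z.1 := by simp [hw]
  have hwim : w.im = -z.2 := by simp [hw]
  have hζ : ((z.1 ^ 2 - z.2 ^ 2 : ℝ) : ℂ) + ((-2 * z.1 * z.2 : ℝ) : ℂ) * Complex.I
      = w ^ 2 := by
    have hI : (Complex.I : ℂ) ^ 2 = -1 := Complex.I_sq
    rw [hw]; push_cast; ring_nf; rw [hI]; ring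
  have hsqrt : (((z.1 ^ 2 - z.2 ^ 2 : ℝ) : ℂ) + ((-2 * z.1 * z.2 : ℝ) : ℂ) * Complex.I)
      ^ (1 / 2 : ℂ) = w := by
    rw [hζ]
    exact sqrt_sq (by rw [hwre]; exact hp) (by rw [hwim]; linarith)
  rw [hT]
  refine Prod.ext ?_ ?_
  · show ((((z.1 ^ 2 - z.2 ^ 2 : ℝ) : ℂ) + ((-2 * z.1 * z.2 : ℝ) : ℂ) * Complex.I)
      ^ (1 / 2 : ℂ)).re = z.1
    rw [hsqrt, hwre]
  · show -((((z.1 ^ 2 - z.2 ^ 2 : ℝ) : ℂ) + ((-2 * z.1 * z.2 : ℝ) : ℂ) * Complex.I)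
      ^ (1 / 2 : ℂ)).im = z.2
    rw [hsqrt, hwim]; ring

theorem statement13 :
    (∀ z ∈ Hset, TModel z
      = (((((z.1 : ℂ) + (z.2 : ℂ) * Complex.I) ^ (1 / 2 : ℂ)).re),
         -((((z.1 : ℂ) + (z.2 : ℂ) * Complex.I) ^ (1 / 2 : ℂ)).im))) ∧
    Set.BijOn TModel Hset Qset ∧
    (∀ z ∈ Hset, AnalyticAt ℝ TModel z) ∧
    (∀ z ∈ Qset, (z.1 ^ 2 - z.2 ^ 2, -2 * z.1 * z.2) ∈ Hset ∧
      TModel (z.1 ^ 2 - z.2 ^ 2, -2 * z.1 * z.2) = z) ∧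
    (∀ z ∈ Hset,
      ((TModel z).1 ^ 2 - (TModel z).2 ^ 2, -2 * (TModel z).1 * (TModel z).2) = z) ∧
    ∀ z ∈ Qset, vModel z = -(1 / 3) * (z.1 ^ 3 - 3 * z.1 * z.2 ^ 2) := by
  have hTeq : ∀ z ∈ Hset, TModel z
      = (((((z.1 : ℂ) + (z.2 : ℂ) * Complex.I) ^ (1 / 2 : ℂ)).re),
         -((((z.1 : ℂ) + (z.2 : ℂ) * Complex.I) ^ (1 / 2 : ℂ)).im)) :=
    fun z hz => TModel_eq z hz
  have hmaps : Set.MapsTo TModel Hset Qset := by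
    intro z hz
    have him : (0 : ℝ) < ((z.1 : ℂ) + (z.2 : ℂ) * Complex.I).im := by simpa [Hset] using hz
    have hpos := sqrt_re_im_pos him
    rw [hTeq z hz]
    exact ⟨hpos.1, by simpa using hpos.2⟩
  have hinj : Set.InjOn TModel Hset := by
    intro a ha b hb hab
    have h1 := TModel_left_inv a ha
    have h2 := TModel_left_inv b hb
    rw [← h1, ← h2, hab]
  have hsurj : Set.SurjOn TModel Hset Qset := by
    intro q hq
    obtain ⟨hH, hT⟩ := TModel_right_inv q hq
    exact ⟨_, hH, hT⟩
  refine ⟨hTeq, ⟨hmaps, hinj, hsurj⟩, ?_, fun z hz => TModel_right_inv z hz,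
    fun z hz => TModel_left_inv z hz, ?_⟩
  · -- analyticity
    intro z hz
    have hopen : IsOpen Hset := isOpen_lt continuous_const continuous_snd
    have hζim : (0 : ℝ) < ((z.1 : ℂ) + (z.2 : ℂ) * Complex.I).im := by simpa [Hset] using hz
    have hanal : AnalyticAt ℂ (fun w : ℂ => w ^ (1 / 2 : ℂ))
        ((z.1 : ℂ) + (z.2 : ℂ) * Complex.I) := by
      have hdiff : DifferentiableOn ℂ (fun w : ℂ => w ^ (1 / 2 : ℂ)) Complex.slitPlane :=
        fun w hw =>
          ((Complex.hasStrictDerivAt_cpow_const hw).hasDerivAt.differentiableAt).differentiableWithinAt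
      have := hdiff.analyticOnNhd Complex.isOpen_slitPlane
      exact this _ (Complex.mem_slitPlane_iff.mpr (Or.inr (ne_of_gt hζim)))
    have hembA : AnalyticAt ℝ (fun p : ℝ × ℝ => emb p) z := emb.analyticAt z
    have hcomp : AnalyticAt ℝ (fun p : ℝ × ℝ => (emb p) ^ (1 / 2 : ℂ)) z := by
      have := (hanal.restrictScalars (𝕜 := ℝ))
      have hembz : emb z = (z.1 : ℂ) + (z.2 : ℂ) * Complex.I := emb_apply z
      exact AnalyticAt.comp (by rwa [← hembz] at this) hembA
    have hg : AnalyticAt ℝ (fun p : ℝ × ℝ =>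
        ((((p.1 : ℂ) + (p.2 : ℂ) * Complex.I) ^ (1 / 2 : ℂ)).re,
          -((((p.1 : ℂ) + (p.2 : ℂ) * Complex.I) ^ (1 / 2 : ℂ)).im))) z := by
      have h1 : AnalyticAt ℝ (fun p : ℝ × ℝ =>
          (((p.1 : ℂ) + (p.2 : ℂ) * Complex.I) ^ (1 / 2 : ℂ)).re) z := by
        have := (Complex.reCLM.analyticAt _).comp hcomp
        simpa [emb_apply, Function.comp_def] using this
      have h2 : AnalyticAt ℝ (fun p : ℝ × ℝ =>
          -((((p.1 : ℂ) + (p.2 : ℂ) * Complex.I) ^ (1 / 2 : ℂ)).im)) z := by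
        have := ((Complex.imCLM.analyticAt _).comp hcomp).neg
        exact (by simpa [emb_apply, Function.comp_def] using (Complex.imCLM.analyticAt _).comp hcomp :
          AnalyticAt ℝ (fun p : ℝ × ℝ => (((p.1 : ℂ) + (p.2 : ℂ) * Complex.I) ^ (1 / 2 : ℂ)).im) z).neg
      exact h1.prod h2
    apply hg.congr
    filter_upwards [hopen.mem_nhds hz] with p hp
    exact (TModel_eq p hp).symm
  · -- Legendre function
    intro z hz
    obtain ⟨hp, hq⟩ := hz
    have hH : (0 : ℝ) < -2 * z.1 * z.2 := by nlinarith
    set w : ℂ := (z.1 : ℂ) - (z.2 : ℂ) * Complex.I with hw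
    have hζ : ((z.1 ^ 2 - z.2 ^ 2 : ℝ) : ℂ) + ((-2 * z.1 * z.2 : ℝ) : ℂ) * Complex.I
        = w ^ 2 := by
      have hI : (Complex.I : ℂ) ^ 2 = -1 := Complex.I_sq
      rw [hw]; push_cast; ring_nf; rw [hI]; ring
    have hwre : w.re = z.1 := by simp [hw]
    have hwim : w.im = -z.2 := by simp [hw]
    have hwne : w ≠ 0 := by
      intro h
      rw [h] at hwre; simp at hwre; rw [← hwre] at hp; exact lt_irrefl 0 hp
    have hne : w ^ 2 ≠ 0 := pow_ne_zero 2 hwne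
    have hsqrt : (w ^ 2) ^ (1 / 2 : ℂ) = w :=
      sqrt_sq (by rw [hwre]; exact hp) (by rw [hwim]; linarith)
    have h32 : (w ^ 2) ^ (3 / 2 : ℂ) = w ^ 3 := by
      rw [cpow_three_halves hne, hsqrt]; ring
    have hre3 : (w ^ 3).re = z.1 ^ 3 - 3 * z.1 * z.2 ^ 2 := by
      have : w ^ 3 = w * w * w := by ring
      rw [this, Complex.mul_re, Complex.mul_re, Complex.mul_im, hwre, hwim]
      ring
    show wModel (z.1 ^ 2 - z.2 ^ 2, -2 * z.1 * z.2)
        - (z.1 ^ 2 - z.2 ^ 2) * z.1 - (-2 * z.1 * z.2) * z.2 = _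
    have hwM : wModel (z.1 ^ 2 - z.2 ^ 2, -2 * z.1 * z.2)
        = (2 / 3) * (z.1 ^ 3 - 3 * z.1 * z.2 ^ 2) := by
      show (2 / 3 : ℝ) * ((((z.1 ^ 2 - z.2 ^ 2 : ℝ) : ℂ)
          + ((-2 * z.1 * z.2 : ℝ) : ℂ) * Complex.I) ^ (3 / 2 : ℂ)).re = _
      rw [hζ, h32, hre3]
    rw [hwM]; ring

end
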